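/- arXiv:1401.3236 — 2 statements merged into one kernel-verified Lean document; each statement's English description precedes it below -/
import Mathlib

section
/- If a Volterra kernel h on [0,T]×[0,T] (square-integrable on the region {0 ≤ s < t ≤ T}, and zero for s > t) is homogeneous of degree -1, i.e. h(t,s) = (1/a)·h(t/a, s/a) for all a > 0 and 0 ≤ s < t ≤ T, then h vanishes almost everywhere on [0,T]×[0,T]. -/
open MeasureTheory Set

/-- A square-integrable Volterra kernel on `[0,T] × [0,T]` that is homogeneous of
degree `-1` vanishes almost everywhere on `[0,T] × [0,T]`. -/
theorem volterra_kernel_homogeneous_neg_one_vanishes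
    (T : ℝ) (hT : 0 < T) (h : ℝ → ℝ → ℝ)
    (hmeas : Measurable (Function.uncurry h))
    (hL2 : IntegrableOn (fun p : ℝ × ℝ => (h p.1 p.2) ^ 2)
      {p : ℝ × ℝ | 0 ≤ p.2 ∧ p.2 < p.1 ∧ p.1 ≤ T})
    (hvol : ∀ t s : ℝ, t < s → h t s = 0)
    (hhom : ∀ a : ℝ, 0 < a → ∀ t s : ℝ, 0 ≤ s → s < t → t ≤ T →
      h t s = a⁻¹ * h (t / a) (s / a)) :
    ∀ᵐ p ∂(volume.restrict ((Icc (0:ℝ) T) ×ˢ (Icc (0:ℝ) T))), h (Prod.fst p) (Prod.snd p) = 0 := by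
  set f : ℝ × ℝ → ℝ := fun p => h p.1 p.2 ^ 2 with hf
  have hfmeas : Measurable f := (hmeas.pow_const 2)
  set Tri : ℝ → Set (ℝ × ℝ) := fun c => {p : ℝ × ℝ | 0 ≤ p.2 ∧ p.2 < p.1 ∧ p.1 ≤ c} with hTri
  have hTriMeas : ∀ c, MeasurableSet (Tri c) := by
    intro c
    exact (measurableSet_le measurable_const measurable_snd).inter
      ((measurableSet_lt measurable_snd measurable_fst).inter
        (measurableSet_le measurable_fst measurable_const))
  have hfnonneg : ∀ p, 0 ≤ f p := fun p => sq_nonneg _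
  -- the scaling identity
  have key : ∀ a : ℝ, 0 < a → ∫ p in Tri (T / a), f p = ∫ p in Tri T, f p := by
    intro a ha
    have hiff : ∀ p : ℝ × ℝ, a • p ∈ Tri T ↔ p ∈ Tri (T / a) := by
      intro p
      simp only [hTri, mem_setOf_eq, Prod.smul_fst, Prod.smul_snd, smul_eq_mul]
      constructor
      · rintro ⟨h1, h2, h3⟩
        refine ⟨nonneg_of_mul_nonneg_right h1 ha, (mul_lt_mul_iff_right₀ ha).mp h2, ?_⟩
        rw [le_div_iff₀ ha]; nlinarith
      · rintro ⟨h1, h2, h3⟩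
        refine ⟨mul_nonneg ha.le h1, (mul_lt_mul_iff_right₀ ha).mpr h2, ?_⟩
        rw [le_div_iff₀ ha] at h3; nlinarith
    have hpt : ∀ p : ℝ × ℝ, (Tri T).indicator f (a • p)
        = (a ^ 2)⁻¹ * (Tri (T / a)).indicator f p := by
      intro p
      by_cases hp : p ∈ Tri (T / a)
      · rw [indicator_of_mem ((hiff p).mpr hp), indicator_of_mem hp]
        have hp' := (hiff p).mpr hp
        simp only [hTri, mem_setOf_eq, Prod.smul_fst, Prod.smul_snd, smul_eq_mul] at hp'
        have hh := hhom a ha (a * p.1) (a * p.2) hp'.1 hp'.2.1 hp'.2.2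
        have e1 : a * p.1 / a = p.1 := by field_simp
        have e2 : a * p.2 / a = p.2 := by field_simp
        rw [e1, e2] at hh
        simp only [hf, Prod.smul_fst, Prod.smul_snd, smul_eq_mul]
        rw [hh]; ring
      · rw [indicator_of_notMem (fun hc => hp ((hiff p).mp hc)),
          indicator_of_notMem hp, mul_zero]
    have hcv := MeasureTheory.Measure.integral_comp_smul (μ := volume)
      ((Tri T).indicator f) a
    simp only [hpt] at hcv
    rw [integral_const_mul, integral_indicator (hTriMeas (T / a)),
      integral_indicator (hTriMeas T)] at hcv
    have hrank : Module.finrank ℝ (ℝ × ℝ) = 2 := by simp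
    rw [hrank, smul_eq_mul, abs_of_pos (by positivity : (0:ℝ) < (a ^ 2)⁻¹)] at hcv
    exact mul_left_cancel₀ (by positivity : ((a:ℝ) ^ 2)⁻¹ ≠ 0) hcv
  -- dominated convergence: the integral over the triangle is zero
  have hInt : IntegrableOn f (Tri T) := hL2
  have hIzero : ∫ p in Tri T, f p = 0 := by
    have hseq : ∀ n : ℕ, ∫ p, (Tri (T / ((n : ℝ) + 1))).indicator f p = ∫ p in Tri T, f p := by
      intro n
      rw [integral_indicator (hTriMeas _)]
      exact key ((n : ℝ) + 1) (by positivity)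
    have hdct : Filter.Tendsto (fun n : ℕ => ∫ p, (Tri (T / ((n : ℝ) + 1))).indicator f p)
        Filter.atTop (nhds (∫ _p : ℝ × ℝ, (0 : ℝ))) := by
      apply tendsto_integral_of_dominated_convergence ((Tri T).indicator f)
      · intro n
        exact (hfmeas.indicator (hTriMeas _)).aestronglyMeasurable
      · rw [← integrable_indicator_iff (hTriMeas T)] at hInt
        exact hInt
      · intro n
        refine Filter.Eventually.of_forall fun p => ?_
        by_cases hp : p ∈ Tri (T / ((n : ℝ) + 1))
        · have hsub : p ∈ Tri T := by
            simp only [hTri, mem_setOf_eq] at hp ⊢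
            refine ⟨hp.1, hp.2.1, hp.2.2.trans ?_⟩
            rw [div_le_iff₀ (by positivity : (0:ℝ) < (n:ℝ) + 1)]
            nlinarith [hT.le, (Nat.cast_nonneg n : (0:ℝ) ≤ n)]
          rw [indicator_of_mem hp, indicator_of_mem hsub,
            Real.norm_eq_abs, abs_of_nonneg (hfnonneg p)]
        · rw [indicator_of_notMem hp, norm_zero]
          exact indicator_nonneg (fun q _ => hfnonneg q) p
      · refine Filter.Eventually.of_forall fun p => ?_
        have hev : ∀ᶠ n : ℕ in Filter.atTop, (Tri (T / ((n : ℝ) + 1))).indicator f p = 0 := by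
          rw [Filter.eventually_atTop]
          refine ⟨⌈T / p.1⌉₊ ⊔ ⌈T⌉₊, fun n hn => indicator_of_notMem ?_ f⟩
          simp only [hTri, mem_setOf_eq]
          rintro ⟨h1, h2, h3⟩
          have hp1 : 0 < p.1 := lt_of_le_of_lt h1 h2
          have hc1 : T / p.1 ≤ (n : ℝ) := by
            refine (Nat.le_ceil _).trans ?_
            exact_mod_cast le_trans (le_sup_left) hn
          have hc2 : T ≤ n * p.1 := by
            rw [div_le_iff₀ hp1] at hc1; linarith
          rw [le_div_iff₀ (by positivity : (0:ℝ) < (n:ℝ) + 1)] at h3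
          nlinarith
        exact Filter.Tendsto.congr' (hev.mono fun n hn => hn.symm) tendsto_const_nhds
    rw [integral_zero] at hdct
    exact tendsto_nhds_unique ((Filter.tendsto_congr hseq).mp hdct) tendsto_const_nhds
      |>.symm.trans rfl
  -- deduce f = 0 a.e. on the triangle
  have hae : ∀ᵐ p : ℝ × ℝ, p ∈ Tri T → h p.1 p.2 = 0 := by
    have h0 : f =ᵐ[volume.restrict (Tri T)] 0 := by
      rw [← integral_eq_zero_iff_of_nonneg_ae
        (Filter.Eventually.of_forall fun p => hfnonneg p) hInt]
      exact hIzero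
    have h1 : ∀ᵐ p ∂volume.restrict (Tri T), h p.1 p.2 = 0 := by
      filter_upwards [h0] with p hp
      have hp2 : h p.1 p.2 ^ 2 = 0 := hp
      exact pow_eq_zero_iff (n := 2) (by norm_num) |>.mp hp2
    exact (ae_restrict_iff' (hTriMeas T)).mp h1
  -- the diagonal is null
  have hdiag : ∀ᵐ p : ℝ × ℝ, p.1 ≠ p.2 := by
    have hDmeas : MeasurableSet {p : ℝ × ℝ | p.1 = p.2} :=
      measurableSet_eq_fun measurable_fst measurable_snd
    have hz : volume {p : ℝ × ℝ | p.1 = p.2} = 0 := by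
      rw [Measure.volume_eq_prod, Measure.measure_prod_null hDmeas]
      refine Filter.Eventually.of_forall fun x => ?_
      have : Prod.mk x ⁻¹' {p : ℝ × ℝ | p.1 = p.2} = {x} := by
        ext y; simp [eq_comm]
      show volume (Prod.mk x ⁻¹' {p : ℝ × ℝ | p.1 = p.2}) = (0 : ℝ → ENNReal) x
      rw [this]
      exact Real.volume_singleton
    rw [ae_iff]
    simpa using hz
  -- assemble
  rw [ae_restrict_iff' ((measurableSet_Icc).prod (measurableSet_Icc))]
  filter_upwards [hae, hdiag] with p hp hne
  rintro ⟨⟨hs0, hsT⟩, ⟨ht0, htT⟩⟩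
  rcases lt_trichotomy p.2 p.1 with hlt | heq | hgt
  · exact hp ⟨ht0, hlt, hsT⟩
  · exact absurd heq.symm hne
  · exact hvol p.1 p.2 hgt
end

section
/- Two integrable functions f, g on (0, T] with equal Mellin transforms, ∫₀^∞ f(s) s^(p−1) ds = ∫₀^∞ g(s) s^(p−1) ds for all p in a suitable range (e.g. all p in an interval where both integrals converge absolutely), are equal almost everywhere. -/
open MeasureTheory Set
open scoped Topology

set_option maxHeartbeats 1000000 in
/-- Uniqueness of the Mellin transform: two integrable functions supported on `(0,T]`
whose Mellin transforms agree for all `p` in an open interval (where both integrals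
converge absolutely) are equal almost everywhere. -/
theorem mellin_transform_uniqueness
    (T : ℝ) (hT : 0 < T) (f g : ℝ → ℝ)
    (hfmeas : Measurable f) (hgmeas : Measurable g)
    (hfsupp : ∀ s : ℝ, s ≤ 0 ∨ T < s → f s = 0)
    (hgsupp : ∀ s : ℝ, s ≤ 0 ∨ T < s → g s = 0)
    (a b : ℝ) (hab : a < b)
    (hfint : ∀ p ∈ Ioo a b, IntegrableOn (fun s => f s * s ^ (p - 1)) (Ioi (0:ℝ)))
    (hgint : ∀ p ∈ Ioo a b, IntegrableOn (fun s => g s * s ^ (p - 1)) (Ioi (0:ℝ)))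
    (hMellin : ∀ p ∈ Ioo a b,
      ∫ s in Ioi (0:ℝ), f s * s ^ (p - 1) = ∫ s in Ioi (0:ℝ), g s * s ^ (p - 1)) :
    f =ᵐ[volume] g := by
  classical
  set h : ℝ → ℝ := fun s => f s - g s with hh
  have hhmeas : Measurable h := hfmeas.sub hgmeas
  have hnotmem : ∀ s : ℝ, s ∉ Ioc (0:ℝ) T → s ≤ 0 ∨ T < s := by
    intro s hs
    by_cases h0 : s ≤ 0
    · exact Or.inl h0
    · right
      by_contra hTs
      exact hs ⟨lt_of_not_ge h0, le_of_not_gt hTs⟩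
  -- integrability of `h s * s ^ (p-1)` on `(0, T]` for `p ∈ (a,b)`
  have hhint : ∀ p ∈ Ioo a b, IntegrableOn (fun s => h s * s ^ (p - 1)) (Ioc (0:ℝ) T) := by
    intro p hp
    have h1 := (hfint p hp).mono_set (Ioc_subset_Ioi_self : Ioc (0:ℝ) T ⊆ Ioi 0)
    have h2 := (hgint p hp).mono_set (Ioc_subset_Ioi_self : Ioc (0:ℝ) T ⊆ Ioi 0)
    refine MeasureTheory.IntegrableOn.congr_fun (h1.sub h2) (fun s _ => ?_) measurableSet_Ioc
    simp [hh, sub_mul]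
  -- reduction of integrals over `Ioi 0` to integrals over `Ioc 0 T`
  have hkey : ∀ (u : ℝ → ℝ), (∀ s, s ≤ 0 ∨ T < s → u s = 0) → ∀ c : ℝ,
      ∫ s in Ioc (0:ℝ) T, u s * s ^ c = ∫ s in Ioi (0:ℝ), u s * s ^ c := by
    intro u hu c
    have hz : ∀ x, x ∉ Ioc (0:ℝ) T → u x * x ^ c = 0 := by
      intro x hx; rw [hu x (hnotmem x hx), zero_mul]
    have hz' : ∀ x, x ∉ Ioi (0:ℝ) → u x * x ^ c = 0 := by
      intro x hx; rw [hu x (Or.inl (le_of_not_gt hx)), zero_mul]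
    rw [setIntegral_eq_integral_of_forall_compl_eq_zero hz,
      setIntegral_eq_integral_of_forall_compl_eq_zero hz']
  -- the (real) Mellin transform of `h` vanishes on `(a,b)`
  have hzero : ∀ p ∈ Ioo a b, ∫ s in Ioc (0:ℝ) T, h s * s ^ (p - 1) = 0 := by
    intro p hp
    have h1 := (hfint p hp).mono_set (Ioc_subset_Ioi_self : Ioc (0:ℝ) T ⊆ Ioi 0)
    have h2 := (hgint p hp).mono_set (Ioc_subset_Ioi_self : Ioc (0:ℝ) T ⊆ Ioi 0)
    have e1 : ∫ s in Ioc (0:ℝ) T, h s * s ^ (p - 1)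
        = (∫ s in Ioc (0:ℝ) T, f s * s ^ (p - 1)) - ∫ s in Ioc (0:ℝ) T, g s * s ^ (p - 1) := by
      rw [← integral_sub h1 h2]
      refine setIntegral_congr_fun measurableSet_Ioc (fun s _ => ?_)
      simp [hh, sub_mul]
    rw [e1, hkey f hfsupp, hkey g hgsupp, hMellin p hp, sub_self]
  -- fixed exponents
  set p' : ℝ := (3*a + b)/4 with hp'
  set p₀ : ℝ := (a + b)/2 with hp₀
  have hap' : a < p' := by rw [hp']; linarith
  have hp'b : p' < b := by rw [hp']; linarith
  have hp'p₀ : p' < p₀ := by rw [hp', hp₀]; linarith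
  have hp₀b : p₀ < b := by rw [hp₀]; linarith
  have hInt' : IntegrableOn (fun s => h s * s ^ (p' - 1)) (Ioc (0:ℝ) T) :=
    hhint p' ⟨hap', hp'b⟩
  -- uniform bound lemma
  have hboundC : ∀ lo P : ℝ, p' < lo → ∃ C : ℝ, ∀ s ∈ Ioc (0:ℝ) T, ∀ r : ℝ,
      lo ≤ r → r ≤ P → s ^ (r - 1) * (1 + |Real.log s|) ≤ C * s ^ (p' - 1) := by
    intro lo P hlo
    set ε : ℝ := lo - p' with hε
    have hεpos : 0 < ε := by rw [hε]; linarith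
    set M : ℝ := max T 1 with hM
    have hM1 : (1:ℝ) ≤ M := le_max_right _ _
    refine ⟨max (1 + 1/ε) (M ^ (P - p') * (1 + Real.log M)), ?_⟩
    intro s hs r hr hrP
    have hs0 : 0 < s := hs.1
    have hsplit : s ^ (r - 1) = s ^ (p' - 1) * s ^ (r - p') := by
      rw [← Real.rpow_add hs0]; ring_nf
    have hmain : s ^ (r - p') * (1 + |Real.log s|)
        ≤ max (1 + 1/ε) (M ^ (P - p') * (1 + Real.log M)) := by
      rcases le_or_gt s 1 with hs1 | hs1
      · refine le_trans ?_ (le_max_left _ _)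
        have h1 : s ^ (r - p') ≤ 1 :=
          Real.rpow_le_one hs0.le hs1 (by linarith)
        have h2 : s ^ (r - p') * |Real.log s| ≤ s ^ ε * |Real.log s| := by
          have := Real.rpow_le_rpow_of_exponent_ge hs0 hs1 (by linarith : ε ≤ r - p')
          exact mul_le_mul_of_nonneg_right this (abs_nonneg _)
        have h3 : s ^ ε * |Real.log s| ≤ 1/ε := by
          have := Real.abs_log_mul_self_rpow_lt s ε hs0 hs1 hεpos
          rw [abs_mul, abs_of_nonneg (Real.rpow_nonneg hs0.le ε)] at this
          nlinarith [abs_nonneg (Real.log s)]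
        have hnn : 0 ≤ s ^ (r - p') := Real.rpow_nonneg hs0.le _
        nlinarith [abs_nonneg (Real.log s)]
      · refine le_trans ?_ (le_max_right _ _)
        have hsM : s ≤ M := le_trans hs.2 (le_max_left _ _)
        have h1 : s ^ (r - p') ≤ M ^ (P - p') := by
          calc s ^ (r - p') ≤ M ^ (r - p') :=
                Real.rpow_le_rpow hs0.le hsM (by linarith)
            _ ≤ M ^ (P - p') :=
                Real.rpow_le_rpow_of_exponent_le hM1 (by linarith)
        have h2 : 1 + |Real.log s| ≤ 1 + Real.log M := by
          rw [abs_of_nonneg (Real.log_nonneg hs1.le)]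
          have := Real.log_le_log (by linarith) hsM
          linarith
        have hnn1 : 0 ≤ s ^ (r - p') := Real.rpow_nonneg hs0.le _
        have hnn2 : 0 ≤ 1 + |Real.log s| := by positivity
        exact mul_le_mul h1 h2 hnn2 (le_trans hnn1 h1)
    have hfin := mul_le_mul_of_nonneg_left hmain (Real.rpow_nonneg hs0.le (p' - 1))
    rw [hsplit, mul_assoc]
    linarith [hfin]
  -- integrability for all exponents `q > p'`
  have hIntq : ∀ q : ℝ, p' < q → IntegrableOn (fun s => h s * s ^ (q - 1)) (Ioc (0:ℝ) T) := by
    intro q hq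
    obtain ⟨C, hC⟩ := hboundC q q hq
    have hmeas : AEStronglyMeasurable (fun s : ℝ => h s * s ^ (q - 1))
        (volume.restrict (Ioc (0:ℝ) T)) := by
      refine hhmeas.aestronglyMeasurable.mul ?_
      refine ContinuousOn.aestronglyMeasurable ?_ measurableSet_Ioc
      exact continuousOn_of_forall_continuousAt fun s hs =>
        Real.continuousAt_rpow_const s _ (Or.inl hs.1.ne')
    refine Integrable.mono' (hInt'.norm.const_mul C) hmeas ?_
    filter_upwards [ae_restrict_mem measurableSet_Ioc] with s hs
    have hs0 : 0 < s := hs.1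
    have h1 : s ^ (q - 1) ≤ C * s ^ (p' - 1) := by
      have := hC s hs q le_rfl le_rfl
      nlinarith [Real.rpow_nonneg hs0.le (q - 1), abs_nonneg (Real.log s)]
    rw [Real.norm_eq_abs, abs_mul, abs_of_nonneg (Real.rpow_nonneg hs0.le _),
      Real.norm_eq_abs, abs_mul, abs_of_nonneg (Real.rpow_nonneg hs0.le _)]
    have := mul_le_mul_of_nonneg_left h1 (abs_nonneg (h s))
    nlinarith [this]
  -- the complex Mellin transform
  set G : ℂ → ℂ := fun z => ∫ s in Ioc (0:ℝ) T, (h s : ℂ) * (s : ℂ) ^ (z - 1) with hG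
  have hGre : ∀ p : ℝ, G p = ((∫ s in Ioc (0:ℝ) T, h s * s ^ (p - 1) : ℝ) : ℂ) := by
    intro p
    simp only [hG]
    have e0 : ((∫ s in Ioc (0:ℝ) T, h s * s ^ (p - 1) : ℝ) : ℂ)
        = ∫ s in Ioc (0:ℝ) T, ((h s * s ^ (p - 1) : ℝ) : ℂ) := integral_ofReal.symm
    rw [e0]
    refine setIntegral_congr_fun measurableSet_Ioc (fun s hs => ?_)
    have e : ((s : ℂ)) ^ ((p : ℂ) - 1) = ((s ^ (p - 1) : ℝ) : ℂ) := by
      rw [Complex.ofReal_cpow hs.1.le]; norm_num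
    rw [e, ← Complex.ofReal_mul]
  have hGzero : ∀ p ∈ Ioo a b, G p = 0 := by
    intro p hp; rw [hGre, hzero p hp, Complex.ofReal_zero]
  -- differentiability of `G` on `{z | p' < z.re}`
  have hGdiff : ∀ z₀ : ℂ, p' < z₀.re → DifferentiableAt ℂ G z₀ := by
    intro z₀ hz₀
    set ε : ℝ := (z₀.re - p')/2 with hε
    have hεpos : 0 < ε := by rw [hε]; linarith
    obtain ⟨C, hC⟩ := hboundC (z₀.re - ε) (z₀.re + ε) (by rw [hε]; linarith)
    set μ : Measure ℝ := volume.restrict (Ioc (0:ℝ) T) with hμ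
    set F : ℂ → ℝ → ℂ := fun z s => (h s : ℂ) * (s : ℂ) ^ (z - 1) with hF
    set F' : ℂ → ℝ → ℂ := fun z s => (h s : ℂ) * ((s : ℂ) ^ (z - 1) * Complex.log s) with hF'
    set bound : ℝ → ℝ := fun s => C * ‖h s * s ^ (p' - 1)‖ with hbound
    have hre : ∀ z ∈ Metric.ball z₀ ε, z₀.re - ε ≤ z.re ∧ z.re ≤ z₀.re + ε := by
      intro z hz
      rw [Metric.mem_ball, Complex.dist_eq] at hz
      have := (Complex.abs_re_le_norm (z - z₀)).trans hz.le
      rw [Complex.sub_re, abs_le] at this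
      constructor <;> linarith [this.1, this.2]
    have hmeas : ∀ z : ℂ, AEStronglyMeasurable (F z) μ := by
      intro z
      refine AEStronglyMeasurable.mul
        ((Complex.measurable_ofReal.comp hhmeas).aestronglyMeasurable) ?_
      refine ContinuousOn.aestronglyMeasurable ?_ measurableSet_Ioc
      exact continuousOn_of_forall_continuousAt fun s hs =>
        Complex.continuousAt_ofReal_cpow_const _ _ (Or.inr (ne_of_gt hs.1))
    have hnorm : ∀ z : ℂ, ∀ s ∈ Ioc (0:ℝ) T,
        ‖F z s‖ = |h s| * s ^ (z.re - 1) ∧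
        ‖F' z s‖ = |h s| * (s ^ (z.re - 1) * |Real.log s|) := by
      intro z s hs
      have hs0 : 0 < s := hs.1
      have habs : ‖(s:ℂ) ^ (z - 1)‖ = s ^ (z.re - 1) := by
        rw [Complex.norm_cpow_eq_rpow_re_of_pos hs0, Complex.sub_re,
          Complex.one_re]
      have hlog : ‖Complex.log (s:ℂ)‖ = |Real.log s| := by
        rw [← Complex.ofReal_log hs0.le, Complex.norm_real, Real.norm_eq_abs]
      constructor
      · simp only [hF]
        rw [norm_mul, Complex.norm_real, Real.norm_eq_abs, habs]
      · simp only [hF']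
        rw [norm_mul, Complex.norm_real, Real.norm_eq_abs, norm_mul, habs, hlog]
    have h_bound : ∀ᵐ s ∂μ, ∀ z ∈ Metric.ball z₀ ε, ‖F' z s‖ ≤ bound s := by
      filter_upwards [ae_restrict_mem measurableSet_Ioc] with s hs z hz
      have hs0 : 0 < s := hs.1
      rw [(hnorm z s hs).2]
      have h1 : s ^ (z.re - 1) * |Real.log s| ≤ C * s ^ (p' - 1) := by
        have h2 := hC s hs z.re (hre z hz).1 (hre z hz).2
        nlinarith [Real.rpow_nonneg hs0.le (z.re - 1), abs_nonneg (Real.log s)]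
      simp only [hbound]
      rw [Real.norm_eq_abs, abs_mul, abs_of_nonneg (Real.rpow_nonneg hs0.le _)]
      have := mul_le_mul_of_nonneg_left h1 (abs_nonneg (h s))
      nlinarith [this]
    have bound_integrable : Integrable bound μ := hInt'.norm.const_mul C
    have hF_int : Integrable (F z₀) μ := by
      refine bound_integrable.mono' (hmeas z₀) ?_
      filter_upwards [ae_restrict_mem measurableSet_Ioc] with s hs
      have hs0 : 0 < s := hs.1
      rw [(hnorm z₀ s hs).1]
      have h1 : s ^ (z₀.re - 1) ≤ C * s ^ (p' - 1) := by
        have h2 := hC s hs z₀.re (by linarith) (by linarith)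
        nlinarith [Real.rpow_nonneg hs0.le (z₀.re - 1), abs_nonneg (Real.log s)]
      simp only [hbound]
      rw [Real.norm_eq_abs, abs_mul, abs_of_nonneg (Real.rpow_nonneg hs0.le _)]
      have := mul_le_mul_of_nonneg_left h1 (abs_nonneg (h s))
      nlinarith [this]
    have hF'meas : AEStronglyMeasurable (F' z₀) μ := by
      refine AEStronglyMeasurable.mul
        ((Complex.measurable_ofReal.comp hhmeas).aestronglyMeasurable) ?_
      refine ContinuousOn.aestronglyMeasurable ?_ measurableSet_Ioc
      refine ContinuousOn.mul (continuousOn_of_forall_continuousAt fun s hs =>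
        Complex.continuousAt_ofReal_cpow_const _ _ (Or.inr (ne_of_gt hs.1))) ?_
      refine continuousOn_of_forall_continuousAt fun s hs => ?_
      exact (continuousAt_clog
        (Complex.ofReal_mem_slitPlane.mpr hs.1)).comp Complex.continuous_ofReal.continuousAt
    have h_diff : ∀ᵐ s ∂μ, ∀ z ∈ Metric.ball z₀ ε, HasDerivAt (F · s) (F' z s) z := by
      filter_upwards [ae_restrict_mem measurableSet_Ioc] with s hs z _
      have hs0 : (s:ℂ) ≠ 0 := Complex.ofReal_ne_zero.mpr (ne_of_gt hs.1)
      have u1 : HasDerivAt (fun z : ℂ => (s:ℂ) ^ (z - 1))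
          ((s:ℂ) ^ (z - 1) * Complex.log s) z := by
        have := ((hasDerivAt_id z).sub_const 1).const_cpow (c := (s:ℂ)) (Or.inl hs0)
        simpa using this
      exact u1.const_mul _
    have main := hasDerivAt_integral_of_dominated_loc_of_deriv_le (Metric.ball_mem_nhds z₀ hεpos)
      (Filter.Eventually.of_forall hmeas) hF_int hF'meas h_bound bound_integrable h_diff
    exact main.2.differentiableAt
  -- `G` vanishes on the half-plane `{z | p' < z.re}`
  set U : Set ℂ := {z | p' < z.re} with hU
  have hUopen : IsOpen U := isOpen_lt continuous_const Complex.continuous_re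
  have hGanalytic : AnalyticOnNhd ℂ G U :=
    DifferentiableOn.analyticOnNhd
      (fun z hz => (hGdiff z hz).differentiableWithinAt) hUopen
  have hfreq : ∃ᶠ z in nhdsWithin (p₀:ℂ) {(p₀:ℂ)}ᶜ, G z = 0 := by
    set u : ℕ → ℂ := fun n => ((p₀ + (b - p₀)/2 * (1/(n+1)) : ℝ) : ℂ) with hu
    have htend : Filter.Tendsto u Filter.atTop (nhdsWithin (p₀:ℂ) {(p₀:ℂ)}ᶜ) := by
      refine tendsto_nhdsWithin_of_tendsto_nhds_of_eventually_within _ ?_ ?_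
      · have hr : Filter.Tendsto (fun n : ℕ => p₀ + (b - p₀)/2 * (1/((n:ℝ)+1)))
            Filter.atTop (𝓝 p₀) := by
          have h0 : Filter.Tendsto (fun n : ℕ => (b - p₀)/2 * (1/((n:ℝ)+1)))
              Filter.atTop (𝓝 0) := by
            have := tendsto_one_div_add_atTop_nhds_zero_nat.const_mul ((b - p₀)/2)
            simpa using this
          simpa using Filter.Tendsto.const_add p₀ h0
        exact (Complex.continuous_ofReal.tendsto p₀).comp hr
      · refine Filter.Eventually.of_forall fun n => ?_
        simp only [hu, Set.mem_compl_iff, Set.mem_singleton_iff]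
        intro hc
        have hinj := Complex.ofReal_injective hc
        have hpos : 0 < (b - p₀)/2 * (1/((n:ℝ)+1)) := by
          apply mul_pos (by linarith) (by positivity)
        linarith
    have hev : ∀ n : ℕ, G (u n) = 0 := by
      intro n
      simp only [hu]
      refine hGzero _ ⟨?_, ?_⟩
      · have hpos : 0 ≤ (b - p₀)/2 * (1/((n:ℝ)+1)) := by
          apply mul_nonneg (by linarith) (by positivity)
        linarith [hap'.trans hp'p₀]
      · have h1 : (1:ℝ)/((n:ℝ)+1) ≤ 1 := by
          rw [div_le_one (by positivity)]; simp
        have h2 : (b - p₀)/2 * (1/((n:ℝ)+1)) ≤ (b - p₀)/2 :=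
          mul_le_of_le_one_right (by linarith) h1
        linarith
    exact htend.frequently (Filter.Eventually.of_forall hev).frequently
  have hGU : EqOn G 0 U := by
    refine hGanalytic.eqOn_zero_of_preconnected_of_frequently_eq_zero
      ?_ (z₀ := (p₀:ℂ)) ?_ hfreq
    · exact (convex_halfSpace_re_gt p').isPreconnected
    · rw [hU]; simpa using hp'p₀
  -- all moments of `ψ := h · s^(p₀-1)` vanish
  set ψ : ℝ → ℝ := fun s => h s * s ^ (p₀ - 1) with hψ
  have hψint : IntegrableOn ψ (Ioc (0:ℝ) T) := hIntq p₀ hp'p₀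
  have hmom : ∀ n : ℕ, ∫ s in Ioc (0:ℝ) T, ψ s * s ^ n = 0 := by
    intro n
    have hmem : ((p₀ + n : ℝ) : ℂ) ∈ U := by
      rw [hU]
      simp only [mem_setOf_eq, Complex.ofReal_re]
      have hn : (0:ℝ) ≤ n := Nat.cast_nonneg n
      linarith
    have h0 : G ((p₀ + n : ℝ) : ℂ) = 0 := hGU hmem
    rw [hGre] at h0
    have h1 : ∫ s in Ioc (0:ℝ) T, h s * s ^ ((p₀ + n : ℝ) - 1) = 0 := by
      exact_mod_cast h0
    calc ∫ s in Ioc (0:ℝ) T, ψ s * s ^ n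
        = ∫ s in Ioc (0:ℝ) T, h s * s ^ ((p₀ + n : ℝ) - 1) := by
          refine setIntegral_congr_fun measurableSet_Ioc (fun s hs => ?_)
          simp only [hψ]
          rw [show (p₀ + (n:ℝ)) - 1 = (p₀ - 1) + n by ring, Real.rpow_add hs.1,
            Real.rpow_natCast]
          ring
      _ = 0 := h1
  have hψintn : ∀ n : ℕ, IntegrableOn (fun s => ψ s * s ^ n) (Ioc (0:ℝ) T) := by
    intro n
    have hq : p' < p₀ + n := by
      have hn : (0:ℝ) ≤ n := Nat.cast_nonneg n
      linarith
    refine (hIntq (p₀ + n) hq).congr_fun (fun s hs => ?_) measurableSet_Ioc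
    simp only [hψ]
    rw [show (p₀ + (n:ℝ)) - 1 = (p₀ - 1) + n by ring, Real.rpow_add hs.1,
      Real.rpow_natCast]
    ring
  -- integral against polynomials vanishes
  have hpoly : ∀ P : Polynomial ℝ, ∫ s in Ioc (0:ℝ) T, ψ s * P.eval s = 0 := by
    intro P
    have e : ∀ s : ℝ, ψ s * P.eval s
        = ∑ i ∈ Finset.range (P.natDegree + 1), P.coeff i * (ψ s * s ^ i) := by
      intro s
      rw [Polynomial.eval_eq_sum_range, Finset.mul_sum]
      refine Finset.sum_congr rfl fun i _ => by ring
    simp_rw [e]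
    rw [integral_finset_sum _ (fun i _ => (hψintn i).const_mul (P.coeff i))]
    simp_rw [integral_const_mul]
    simp only [hmom, mul_zero, Finset.sum_const_zero]
  -- integral against continuous functions vanishes
  have hcontint : ∀ v : ℝ → ℝ, Continuous v →
      IntegrableOn (fun s => v s * ψ s) (Ioc (0:ℝ) T) := by
    intro v hv
    obtain ⟨M, hM⟩ := (isCompact_Icc (a := (0:ℝ)) (b := T)).exists_bound_of_continuousOn
      hv.continuousOn
    refine Integrable.mono' (hψint.norm.const_mul M)
      (hv.aestronglyMeasurable.mul hψint.aestronglyMeasurable) ?_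
    filter_upwards [ae_restrict_mem measurableSet_Ioc] with s hs
    rw [norm_mul]
    exact mul_le_mul_of_nonneg_right (hM s (Ioc_subset_Icc_self hs)) (norm_nonneg _)
  have hcont : ∀ u : ℝ → ℝ, Continuous u → ∫ s in Ioc (0:ℝ) T, u s * ψ s = 0 := by
    intro u hu
    set I : ℝ := ∫ s in Ioc (0:ℝ) T, u s * ψ s with hI
    set J : ℝ := ∫ s in Ioc (0:ℝ) T, |ψ s| with hJ
    have hJ0 : 0 ≤ J := integral_nonneg fun s => abs_nonneg _
    have key : ∀ ε : ℝ, 0 < ε → |I| ≤ ε * J := by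
      intro ε hε
      set w : C(Icc (0:ℝ) T, ℝ) := ContinuousMap.restrict (Icc (0:ℝ) T) ⟨u, hu⟩ with hw
      have hmemcl : w ∈ closure ((polynomialFunctions (Icc (0:ℝ) T)) : Set C(Icc (0:ℝ) T, ℝ)) := by
        have hmemtop : w ∈ (polynomialFunctions (Icc (0:ℝ) T)).topologicalClosure := by
          rw [polynomialFunctions_closure_eq_top]; trivial
        exact hmemtop
      obtain ⟨q, hqmem, hqdist⟩ := Metric.mem_closure_iff.mp hmemcl ε hε
      rw [polynomialFunctions_coe] at hqmem
      obtain ⟨P, rfl⟩ := hqmem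
      have hptw : ∀ s ∈ Ioc (0:ℝ) T, |u s - P.eval s| ≤ ε := by
        intro s hs
        have hsIcc : s ∈ Icc (0:ℝ) T := Ioc_subset_Icc_self hs
        have hd := ContinuousMap.dist_apply_le_dist (f := w)
          (g := Polynomial.toContinuousMapOnAlgHom (Icc (0:ℝ) T) P) ⟨s, hsIcc⟩
        have h2 : dist (w ⟨s, hsIcc⟩)
            ((Polynomial.toContinuousMapOnAlgHom (Icc (0:ℝ) T) P) ⟨s, hsIcc⟩) ≤ ε :=
          hd.trans hqdist.le
        simpa [hw, Real.dist_eq, Polynomial.toContinuousMapOnAlgHom,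
          Polynomial.toContinuousMapOn, Polynomial.toContinuousMap] using h2
      have h1 : IntegrableOn (fun s => u s * ψ s) (Ioc (0:ℝ) T) := hcontint u hu
      have h2 : IntegrableOn (fun s => P.eval s * ψ s) (Ioc (0:ℝ) T) :=
        hcontint _ P.continuous
      have h3 : IntegrableOn (fun s => (u s - P.eval s) * ψ s) (Ioc (0:ℝ) T) :=
        hcontint _ (hu.sub P.continuous)
      have e1 : I = ∫ s in Ioc (0:ℝ) T, (u s - P.eval s) * ψ s := by
        have e2 : ∫ s in Ioc (0:ℝ) T, (u s - P.eval s) * ψ s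
            = (∫ s in Ioc (0:ℝ) T, u s * ψ s) - ∫ s in Ioc (0:ℝ) T, P.eval s * ψ s := by
          rw [← integral_sub h1 h2]
          refine setIntegral_congr_fun measurableSet_Ioc (fun s _ => ?_)
          ring
        have hP0 : ∫ s in Ioc (0:ℝ) T, P.eval s * ψ s = 0 := by
          have e3 : ∫ s in Ioc (0:ℝ) T, P.eval s * ψ s = ∫ s in Ioc (0:ℝ) T, ψ s * P.eval s :=
            setIntegral_congr_fun measurableSet_Ioc (fun s _ => by ring)
          rw [e3, hpoly P]
        rw [e2, hP0, sub_zero, hI]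
      rw [e1]
      calc |∫ s in Ioc (0:ℝ) T, (u s - P.eval s) * ψ s|
          = ‖∫ s in Ioc (0:ℝ) T, (u s - P.eval s) * ψ s‖ := (Real.norm_eq_abs _).symm
        _ ≤ ∫ s in Ioc (0:ℝ) T, ‖(u s - P.eval s) * ψ s‖ := norm_integral_le_integral_norm _
        _ ≤ ∫ s in Ioc (0:ℝ) T, ε * |ψ s| := by
            refine setIntegral_mono_on h3.norm (hψint.abs.const_mul ε)
              measurableSet_Ioc (fun s hs => ?_)
            rw [Real.norm_eq_abs, abs_mul]
            exact mul_le_mul_of_nonneg_right (hptw s hs) (abs_nonneg _)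
        _ = ε * J := by rw [integral_const_mul, ← hJ]
    have hIzero : I = 0 := by
      by_contra hne
      have hIpos : 0 < |I| := abs_pos.mpr hne
      have hεp : 0 < |I| / (2 * (J + 1)) := by positivity
      have hk := key _ hεp
      have h2 : |I| / (2 * (J + 1)) * (2 * (J + 1)) = |I| := by field_simp
      nlinarith [mul_nonneg hεp.le hJ0]
    exact hIzero
  -- conclude `φ = 0` a.e. via smooth test functions
  set φ : ℝ → ℝ := (Ioc (0:ℝ) T).indicator ψ with hφ
  have hφint : Integrable φ := (integrable_indicator_iff measurableSet_Ioc).mpr hψint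
  have hφae : ∀ᵐ x ∂(volume : Measure ℝ), φ x = 0 := by
    refine ae_eq_zero_of_integral_contDiff_smul_eq_zero hφint.locallyIntegrable ?_
    intro v hv _
    have e : ∀ x : ℝ, v x • φ x = (Ioc (0:ℝ) T).indicator (fun s => v s * ψ s) x := by
      intro x
      by_cases hx : x ∈ Ioc (0:ℝ) T
      · simp [hφ, Set.indicator_of_mem hx, smul_eq_mul]
      · simp [hφ, Set.indicator_of_notMem hx]
    simp_rw [e]
    rw [integral_indicator measurableSet_Ioc]
    exact hcont v hv.continuous
  -- finish
  filter_upwards [hφae] with s hs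
  by_cases hmem : s ∈ Ioc (0:ℝ) T
  · rw [hφ, Set.indicator_of_mem hmem] at hs
    have hs0 : s ^ (p₀ - 1) ≠ 0 := (Real.rpow_pos_of_pos hmem.1 _).ne'
    have hh0 : h s = 0 := by
      simp only [hψ] at hs
      rcases mul_eq_zero.mp hs with h' | h'
      · exact h'
      · exact absurd h' hs0
    have := sub_eq_zero.mp hh0
    exact this
  · rw [hfsupp s (hnotmem s hmem), hgsupp s (hnotmem s hmem)]
end
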